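/- If a state predicate p ⊆ Σ is intuitionistic (p * Σ ⊆ p), then for any command language S the history predicate hist(p, S) is intuitionistic over the separation algebra of histories: hist(p, S) * HST ⊆ hist(p, S). -/

import Mathlib

open Classical

/-- A separation algebra: a partial commutative monoid with a set of units. -/
structure SepAlg (α : Type*) where
  mul : α → α → Option α
  emp : Set α
  comm : ∀ a b, mul a b = mul b a
  assoc : ∀ a b c, (mul a b).bind (fun x => mul x c) = (mul b c).bind (fun y => mul a y)
  unit_exists : ∀ s, ∃ u ∈ emp, mul s u = some s
  unit_undef : ∀ u u', u ∈ emp → u' ∈ emp → u ≠ u' → mul u u' = none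

/-- A computation: a (possibly empty) history together with a current state,
representing a nonempty sequence of states. -/
abbrev Comp (α : Type*) := List α × α

/-- Multiplication of computations: share the history, multiply the current states. -/
noncomputable def compMul {α : Type*} (M : SepAlg α) (x y : Comp α) : Option (Comp α) :=
  if x.1 = y.1 then (M.mul x.2 y.2).map (fun s => (x.1, s)) else none

/-- Units of the computation algebra: computations whose last state is a unit. -/
def compEmp {α : Type*} (M : SepAlg α) : Set (Comp α) := { x | x.2 ∈ M.emp }

/-- Separating conjunction of predicates over a partial multiplication. -/
def star {β : Type*} (mul : β → β → Option β) (b c : Set β) : Set β :=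
  { x | ∃ y ∈ b, ∃ z ∈ c, mul y z = some x }

/-- Separating implication: p -* q = { γ | {γ} * p ⊆ q }. -/
def wand {β : Type*} (mul : β → β → Option β) (p q : Set β) : Set β :=
  { y | star mul {y} p ⊆ q }

/-- A predicate is intuitionistic if it absorbs arbitrary frames: p * true ⊆ p. -/
def Intuitionistic {β : Type*} (mul : β → β → Option β) (p : Set β) : Prop :=
  star mul p Set.univ ⊆ p

/-- The now predicate ⊡p: computations whose current state satisfies p. -/
def nowPred {α : Type*} (p : Set α) : Set (Comp α) := { x | x.2 ∈ p }

/-- The past predicate ◇p: computations with some strictly earlier state in p. -/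
def pastPred {α : Type*} (p : Set α) : Set (Comp α) := { x | ∃ s ∈ x.1, s ∈ p }

/-- The weak past predicate ⟐p := ⊡p ∪ ◇p. -/
def weakPast {α : Type*} (p : Set α) : Set (Comp α) := nowPred p ∪ pastPred p

/-- A computation predicate is frameable if it is closed under stuttering the last state. -/
def Frameable {α : Type*} (c : Set (Comp α)) : Prop :=
  ∀ x ∈ c, ((x.1 ++ [x.2], x.2) : Comp α) ∈ c

/-- A history: a flat prefix of states and commands, together with a final state. -/
abbrev Hist (α C : Type*) := List (α ⊕ C) × α

/-- Alternation: the given flat list is of the form σ₁.c₁.σ₂...σₙ.cₙ.σ_{n+1} with all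
state blocks σᵢ nonempty, and its command word is the given list. -/
inductive Alt {α C : Type*} : List C → List (α ⊕ C) → Prop
  | base (s : α) (σ : List α) : Alt [] (Sum.inl s :: σ.map Sum.inl)
  | step (s : α) (σ : List α) (c : C) (w : List C) (l : List (α ⊕ C)) :
      Alt w l → Alt (c :: w) (Sum.inl s :: (σ.map Sum.inl ++ Sum.inr c :: l))

/-- The flat sequence represented by a history. -/
def flatten {α C : Type*} (h : Hist α C) : List (α ⊕ C) := h.1 ++ [Sum.inl h.2]

/-- The history predicate hist(p, S): histories with a suffix σ₁.c₁...cₙ.σ_{n+1}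
whose first state is in p and whose command word is in S. -/
def histPred {α C : Type*} (p : Set α) (S : Set (List C)) : Set (Hist α C) :=
  { h | ∃ pre suf, flatten h = pre ++ suf ∧
        (∃ s, suf.head? = some (Sum.inl s) ∧ s ∈ p) ∧
        ∃ w ∈ S, Alt w suf }

/-- Multiplication of histories: share the prefix, multiply the final states. -/
noncomputable def histMul {α C : Type*} (M : SepAlg α) (x y : Hist α C) :
    Option (Hist α C) :=
  if x.1 = y.1 then (M.mul x.2 y.2).map (fun s => (x.1, s)) else none


lemma alt_ne_nil {α C : Type*} {w : List C} {L : List (α ⊕ C)} (h : Alt w L) : L ≠ [] := by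
  cases h <;> simp

lemma alt_replace_last {α C : Type*} {w : List C} {L : List (α ⊕ C)} (h : Alt w L)
    (b : α) : Alt w (L.dropLast ++ [Sum.inl b]) := by
  induction h with
  | base s σ =>
    rcases σ.eq_nil_or_concat with rfl | ⟨σ', a, rfl⟩
    · simpa using Alt.base b ([] : List α)
    · simp only [List.concat_eq_append]
      have : (Sum.inl s :: (σ' ++ [a]).map Sum.inl : List (α ⊕ C)).dropLast
          = Sum.inl s :: σ'.map Sum.inl := by
        have : (Sum.inl s :: (σ' ++ [a]).map Sum.inl : List (α ⊕ C))
            = (Sum.inl s :: σ'.map Sum.inl) ++ [Sum.inl a] := by simp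
        rw [this, List.dropLast_concat]
      rw [this]
      have := Alt.base (C := C) s (σ' ++ [b])
      simpa using this
  | step s σ c w l hl ih =>
    have hne : l ≠ [] := alt_ne_nil hl
    have hd : (Sum.inl s :: (σ.map Sum.inl ++ Sum.inr c :: l) : List (α ⊕ C)).dropLast
        = Sum.inl s :: (σ.map Sum.inl ++ Sum.inr c :: l.dropLast) := by
      have : (Sum.inl s :: (σ.map Sum.inl ++ Sum.inr c :: l) : List (α ⊕ C))
          = (Sum.inl s :: σ.map Sum.inl ++ [Sum.inr c]) ++ l := by simp
      rw [this, List.dropLast_append_of_ne_nil hne]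
      simp
    rw [hd]
    have := Alt.step s σ c w (l.dropLast ++ [Sum.inl b]) ih
    simpa using this

/-- If p is intuitionistic, then the history predicate hist(p, S) is
intuitionistic over the separation algebra of histories. -/
theorem histPred_intuitionistic {α C : Type*} (M : SepAlg α) (p : Set α)
    (S : Set (List C)) (hp : Intuitionistic M.mul p) :
    Intuitionistic (histMul M) (histPred p S : Set (Hist α C)) := by
  rintro h ⟨y, hy, z, -, hmul⟩
  unfold histMul at hmul
  split_ifs at hmul with heq
  · obtain ⟨s, hs, rfl⟩ := Option.map_eq_some_iff.mp hmul
    obtain ⟨pre, suf, hflat, ⟨s', hhead, hs'p⟩, w, hwS, halt⟩ := hy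
    have hsufne : suf ≠ [] := alt_ne_nil halt
    have hy1 : y.1 = pre ++ suf.dropLast := by
      have h1 : (flatten y).dropLast = y.1 := by
        unfold flatten; rw [List.dropLast_concat]
      rw [hflat, List.dropLast_append_of_ne_nil hsufne] at h1
      exact h1.symm
    refine ⟨pre, suf.dropLast ++ [Sum.inl s], ?_, ?_, w, hwS, alt_replace_last halt s⟩
    · show y.1 ++ [Sum.inl s] = _
      rw [hy1]; simp
    · rcases suf with _ | ⟨x, rest⟩
      · exact absurd rfl hsufne
      rcases rest with _ | ⟨x2, rest⟩
      · -- suf = [x]; then x = Sum.inl y.2 and x = Sum.inl s'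
        have hx : x = Sum.inl y.2 := by
          have h1 : (flatten y).getLast? = some (Sum.inl y.2) := by
            unfold flatten; rw [List.getLast?_concat]
          rw [hflat, List.getLast?_concat] at h1
          exact Option.some_injective _ h1
        have hs'' : s' = y.2 := by
          rw [hx] at hhead
          simp at hhead
          first | exact hhead | exact hhead.symm
        refine ⟨s, ?_, ?_⟩
        · simp
        · exact hp ⟨y.2, hs'' ▸ hs'p, z.2, trivial, hs⟩
      · refine ⟨s', ?_, hs'p⟩
        simpa using hhead
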